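/- For every natural number n and every q, x in a commutative ring, x^n = ∑_{k=0}^{n} [n choose k]_q · φ_k(x), where φ_k(x) = ∏_{i=0}^{k-1} (x - q^i). -/
import Mathlib


open Polynomial

/-- The Gaussian (q-binomial) coefficient as a polynomial in `q`. -/
noncomputable def qbinom : ℕ → ℕ → Polynomial ℤ
  | _, 0 => 1
  | 0, _ + 1 => 0
  | n + 1, k + 1 => qbinom n k + X ^ (k + 1) * qbinom n (k + 1)

lemma qbinom_eq_zero_of_lt : ∀ n k : ℕ, n < k → qbinom n k = 0
  | _, 0, h => absurd h (Nat.not_lt_zero _)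
  | 0, _ + 1, _ => rfl
  | n + 1, k + 1, h => by
    rw [qbinom, qbinom_eq_zero_of_lt n k (by omega),
      qbinom_eq_zero_of_lt n (k + 1) (by omega)]
    ring

theorem pow_eq_sum_qbinom_phi (R : Type*) [CommRing R] (q x : R) (n : ℕ) :
    x ^ n = ∑ k ∈ Finset.range (n + 1),
      ((qbinom n k).eval₂ (Int.castRingHom R) q) * ∏ i ∈ Finset.range k, (x - q ^ i) := by
  induction n with
  | zero => simp [qbinom]
  | succ n ih =>
    set c : ℕ → ℕ → R := fun m k => (qbinom m k).eval₂ (Int.castRingHom R) q with hc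
    set φ : ℕ → R := fun k => ∏ i ∈ Finset.range k, (x - q ^ i) with hφ
    have hrec : ∀ m k : ℕ, c (m + 1) (k + 1) = c m k + q ^ (k + 1) * c m (k + 1) := by
      intro m k
      simp only [hc, qbinom, eval₂_add, eval₂_mul, eval₂_X_pow]
    have hc0 : ∀ m, c m 0 = 1 := by intro m; cases m <;> simp [hc, qbinom]
    have hczero : c n (n + 1) = 0 := by
      simp [hc, qbinom_eq_zero_of_lt n (n + 1) (by omega)]
    have hφ0 : φ 0 = 1 := by simp [hφ]
    have hxφ : ∀ k, x * φ k = φ (k + 1) + q ^ k * φ k := by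
      intro k
      rw [hφ]
      simp only [Finset.prod_range_succ]
      ring
    have key : x ^ (n + 1) = ∑ k ∈ Finset.range (n + 1),
        (c n k * φ (k + 1) + q ^ k * c n k * φ k) := by
      calc x ^ (n + 1) = x * x ^ n := by ring
        _ = x * ∑ k ∈ Finset.range (n + 1), c n k * φ k := by rw [ih]
        _ = ∑ k ∈ Finset.range (n + 1), (c n k * (x * φ k)) := by
            rw [Finset.mul_sum]; apply Finset.sum_congr rfl; intro k _; ring
        _ = _ := by
            apply Finset.sum_congr rfl; intro k _; rw [hxφ]; ring
    rw [key, Finset.sum_add_distrib]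
    -- RHS: split off the first term
    rw [Finset.sum_range_succ' (fun k => c (n + 1) k * φ k) (n + 1)]
    simp only [hc0, hφ0, mul_one]
    have hT : ∑ k ∈ Finset.range (n + 1), c (n + 1) (k + 1) * φ (k + 1)
        = ∑ k ∈ Finset.range (n + 1), (c n k * φ (k + 1) + q ^ (k + 1) * c n (k + 1) * φ (k + 1)) := by
      apply Finset.sum_congr rfl; intro k _; rw [hrec]; ring
    rw [hT, Finset.sum_add_distrib]
    have hS2 : ∑ k ∈ Finset.range (n + 1), q ^ k * c n k * φ k
        = (∑ k ∈ Finset.range (n + 1), q ^ (k + 1) * c n (k + 1) * φ (k + 1)) + 1 := by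
      have h1 := Finset.sum_range_succ' (fun k => q ^ k * c n k * φ k) (n + 1)
      have h2 := Finset.sum_range_succ (fun k => q ^ k * c n k * φ k) (n + 1)
      rw [h2] at h1
      simp only [hczero, hc0, hφ0, pow_zero, mul_zero, zero_mul, mul_one, one_mul, add_zero] at h1
      exact h1
    rw [hS2]
    ring
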